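/- Let t₁ and t₂ be real numbers with 0 < t₂ < t₁ < 1. Then there is no homeomorphism f : ℝ → ℝ such that f(t₁·x + (1−t₁)·y) = t₂·f(x) + (1−t₂)·f(y) for all x, y ∈ ℝ. That is, the Alexander quandles (ℝ, ∗_{t₁}) and (ℝ, ∗_{t₂}) are not isomorphic as topological quandles. -/

import Mathlib

/-- Lemma 3.6: if `0 < t₂ < t₁ < 1`, the Alexander quandles `(ℝ, ∗_{t₁})` and
`(ℝ, ∗_{t₂})` are not isomorphic. -/
theorem alexander_quandles_R_not_isomorphic_of_lt_of_lt_one (t₁ t₂ : ℝ)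
    (ht₂ : 0 < t₂) (ht : t₂ < t₁) (ht₁ : t₁ < 1) :
    ¬ ∃ f : ℝ ≃ₜ ℝ, ∀ x y : ℝ,
      f (t₁ * x + (1 - t₁) * y) = t₂ * f x + (1 - t₂) * f y := by
  rintro ⟨f, hf⟩
  have ht₁0 : t₁ ≠ 0 := by linarith
  have ht₁1 : (1 : ℝ) - t₁ ≠ 0 := by linarith
  set a : ℝ := f 0 with ha
  have h1 : ∀ x : ℝ, f (t₁ * x) = t₂ * f x + (1 - t₂) * a := by
    intro x; simpa using hf x 0
  have h2 : ∀ y : ℝ, f ((1 - t₁) * y) = t₂ * a + (1 - t₂) * f y := by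
    intro y; simpa using hf 0 y
  have hadd : ∀ u v : ℝ, f (u + v) - a = (f u - a) + (f v - a) := by
    intro u v
    have key := hf (u / t₁) (v / (1 - t₁))
    rw [mul_div_cancel₀ _ ht₁0, mul_div_cancel₀ _ ht₁1] at key
    have h1' := h1 (u / t₁)
    rw [mul_div_cancel₀ _ ht₁0] at h1'
    have h2' := h2 (v / (1 - t₁))
    rw [mul_div_cancel₀ _ ht₁1] at h2'
    have e1 : t₂ * f (u / t₁) = f u - (1 - t₂) * a := by linarith
    have e2 : (1 - t₂) * f (v / (1 - t₁)) = f v - t₂ * a := by linarith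
    rw [key, e1, e2]; ring
  obtain ⟨L, hL⟩ : ∃ L : ℝ →L[ℝ] ℝ, ∀ x : ℝ, L x = f x - a := by
    refine ⟨(AddMonoidHom.mk' (fun x : ℝ => f x - a) hadd).toRealLinearMap
      (f.continuous.sub continuous_const), fun x => rfl⟩
  have hlin : ∀ x : ℝ, L x = x * L 1 := by
    intro x
    have h := L.map_smul x 1
    simpa [smul_eq_mul] using h
  have hG1 : L 1 ≠ 0 := by
    rw [hL, sub_ne_zero]
    exact fun h => one_ne_zero (f.injective h)
  have key : L (t₁ * 1) = t₂ * L 1 := by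
    rw [hL, hL, h1 1]; ring
  rw [hlin (t₁ * 1)] at key
  have : t₁ = t₂ := by
    field_simp at key
    linarith
  linarith
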